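/- Fix integers x ≥ 1 and φ > x. The probability that the buffer walk started at x reaches 0 at some step n with #{i ≤ n : ξ_i = −1} ≤ φ − 2 (i.e., the buffer empties within the first φ − 2 departures) equals P_s1 = ∑_{k=x}^{φ−2} (x/(2k−x)) · C(2k−x, k−x) · p^{k−x} · q^k. -/

import Mathlib

open MeasureTheory ProbabilityTheory Finset

/-- The buffer walk started at `m`: `S n = m + ∑_{i=1}^n ξ_i`. -/
def bufferWalk {Ω : Type*} (ξ : ℕ → Ω → ℤ) (m : ℕ) (n : ℕ) (ω : Ω) : ℤ :=
  (m : ℤ) + ∑ i ∈ Finset.Icc 1 n, ξ i ω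

/-- The number of departures (services) among the first `n` steps:
`#{i ≤ n : ξ_i = −1}`. -/
def departures {Ω : Type*} (ξ : ℕ → Ω → ℤ) (n : ℕ) (ω : Ω) : ℕ :=
  ((Finset.Icc 1 n).filter (fun i => ξ i ω = -1)).card

open Finset in

def wval (b : Bool) : ℤ := if b then -1 else 1

def wpaths : ℤ → ℕ → Finset (List Bool)
  | x, 0 => if x = 0 then {[]} else ∅
  | x, n+1 => if 0 < x then
      ((wpaths (x-1) n).image (List.cons true)) ∪ ((wpaths (x+1) n).image (List.cons false))
    else ∅

lemma mem_wpaths : ∀ (n : ℕ) (x : ℤ) (l : List Bool),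
    l ∈ wpaths x n ↔ l.length = n ∧ x + (l.map wval).sum = 0 ∧
      ∀ m < n, 0 < x + ((l.take m).map wval).sum := by
  intro n
  induction n with
  | zero =>
    intro x l
    simp only [wpaths]
    constructor
    · intro h
      split at h
      · simp_all
      · simp at h
    · rintro ⟨hl, hs, -⟩
      rw [List.length_eq_zero_iff] at hl
      subst hl
      simp at hs
      simp [hs]
  | succ n ih =>
    intro x l
    simp only [wpaths]
    constructor
    · intro h
      split at h
      · rename_i hx
        simp only [mem_union, mem_image] at h
        rcases h with ⟨t, ht, rfl⟩ | ⟨t, ht, rfl⟩ <;>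
        · rw [ih] at ht
          obtain ⟨hlen, hsum, hpos⟩ := ht
          refine ⟨by simp [hlen], by simp [wval] at hsum ⊢; omega, ?_⟩
          intro m hm
          cases m with
          | zero => simpa using hx
          | succ m =>
            have := hpos m (by omega)
            simp [wval] at this ⊢
            omega
      · simp at h
    · rintro ⟨hlen, hsum, hpos⟩
      have hx : 0 < x := by simpa using hpos 0 (by omega)
      rw [if_pos hx]
      cases l with
      | nil => simp at hlen
      | cons b t =>
        simp only [mem_union, mem_image]
        have hmem : t ∈ wpaths (x + wval b) n := by
          rw [ih]
          refine ⟨by simpa using hlen, by simp [wval] at hsum ⊢; omega, ?_⟩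
          intro m hm
          have := hpos (m+1) (by omega)
          simp [wval] at this ⊢
          omega
        cases b
        · right; exact ⟨t, by simpa [wval] using hmem, rfl⟩
        · have e : x + wval true = x - 1 := by unfold wval; rw [if_pos rfl]; ring
          left; exact ⟨t, by rw [← e]; exact hmem, rfl⟩

lemma wpaths_empty_of_lt : ∀ (n : ℕ) (x : ℤ), (n : ℤ) < x → wpaths x n = ∅ := by
  intro n
  induction n with
  | zero => intro x hx; simp only [wpaths]; rw [if_neg]; omega
  | succ n ih =>
    intro x hx
    simp only [wpaths]
    split
    · rw [ih (x-1) (by push_cast; omega), ih (x+1) (by push_cast; omega)]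
      simp
    · rfl

lemma wpaths_card_succ (x : ℤ) (hx : 0 < x) (n : ℕ) :
    (wpaths x (n+1)).card = (wpaths (x-1) n).card + (wpaths (x+1) n).card := by
  have hinj : ∀ b : Bool, Function.Injective (List.cons b) := by
    intro b a c h; simpa using h
  have hdisj : Disjoint ((wpaths (x-1) n).image (List.cons true))
      ((wpaths (x+1) n).image (List.cons false)) := by
    rw [Finset.disjoint_left]
    rintro l hl hl'
    simp only [mem_image] at hl hl'
    obtain ⟨t, -, rfl⟩ := hl
    obtain ⟨t', -, h⟩ := hl'
    simp at h
  simp only [wpaths, if_pos hx]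
  rw [Finset.card_union_of_disjoint hdisj, Finset.card_image_of_injective _ (hinj true),
    Finset.card_image_of_injective _ (hinj false)]

lemma wpaths_self : ∀ n : ℕ, (wpaths (n : ℤ) n).card = 1 := by
  intro n
  induction n with
  | zero => simp [wpaths]
  | succ n ih =>
    rw [wpaths_card_succ _ (by positivity) n]
    have h1 : ((n : ℤ) + 1 - 1) = (n : ℤ) := by ring
    have h2 : wpaths ((n : ℤ) + 1 + 1) n = ∅ := wpaths_empty_of_lt n _ (by omega)
    push_cast
    rw [h1, h2, ih]
    simp

lemma wpaths_card_eq : ∀ (n : ℕ) (x : ℕ), x ≤ n → (n - x) % 2 = 0 →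
    n * (wpaths (x : ℤ) n).card = x * Nat.choose n ((n - x) / 2) := by
  intro n
  induction n with
  | zero => intro x hx _; interval_cases x; simp
  | succ n ih =>
    intro x hx hpar
    cases x with
    | zero =>
      have : wpaths ((0:ℕ) : ℤ) (n+1) = ∅ := by norm_num [wpaths]
      rw [this]; simp
    | succ y =>
      rw [show (((y+1:ℕ)) : ℤ) = ((y : ℤ) + 1) by push_cast; ring]
      rw [wpaths_card_succ _ (by positivity) n]
      have h1 : ((y : ℤ) + 1 - 1) = (y : ℤ) := by ring
      have h2 : ((y : ℤ) + 1 + 1) = ((y + 2 : ℕ) : ℤ) := by push_cast; ring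
      rw [h1, h2]
      by_cases hyn : y + 2 ≤ n
      · -- main case
        have hy : y ≤ n := by omega
        have hpar1 : (n - y) % 2 = 0 := by omega
        have hpar2 : (n - (y+2)) % 2 = 0 := by omega
        have e1 := ih y hy hpar1
        have e2 := ih (y+2) hyn hpar2
        set m := (n - y) / 2 with hm
        have hm2 : (n - (y+2))/2 = m - 1 := by omega
        have hm1 : 1 ≤ m := by omega
        have hmn : m ≤ n := by omega
        rw [hm2] at e2
        have hnm : (n+1) - ((y+1)) = 2 * m - 1 + 1 := by omega
        have hgoal_m : ((n+1) - (y+1)) / 2 = m := by omega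
        rw [hgoal_m]
        -- identities
        have i1 : (n+1) * Nat.choose n (m-1) = m * Nat.choose (n+1) m := by
          have := Nat.add_one_mul_choose_eq n (m-1)
          simp only [Nat.succ_eq_add_one, show m - 1 + 1 = m by omega] at this
          rw [this, Nat.mul_comm]
        have i2 : Nat.choose (n+1) m = Nat.choose n m + Nat.choose n (m-1) := by
          have := Nat.choose_succ_succ n (m-1)
          simp only [Nat.succ_eq_add_one, show m - 1 + 1 = m by omega] at this
          omega
        have hn0 : 0 < n := by omega
        have key : n * ((n+1) * ((wpaths (y:ℤ) n).card + (wpaths ((y+2:ℕ):ℤ) n).card))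
            = n * ((y+1) * Nat.choose (n+1) m) := by
          have hsub : 2 * (m:ℤ) = (n:ℤ) - (y:ℤ) := by omega
          zify at e1 e2 i1 i2 ⊢
          linear_combination ((n:ℤ)+1) * e1 + ((n:ℤ)+1) * e2 + 2 * i1
            - ((n:ℤ)+1) * (y:ℤ) * i2 + (Nat.choose (n+1) m : ℤ) * hsub
        exact Nat.eq_of_mul_eq_mul_left hn0 key
      · -- y = n (parity forces), or y = n - 1 impossible
        have hyn' : y = n := by omega
        subst hyn'
        have h2' : wpaths ((y + 2 : ℕ) : ℤ) y = ∅ := wpaths_empty_of_lt y _ (by push_cast; omega)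
        rw [h2', wpaths_self y]
        simp

section probside

open MeasureTheory ProbabilityTheory Finset

variable {Ω : Type*} (ξ : ℕ → Ω → ℤ)

/-- pattern of signs of the first `n` steps: `true` = down step. -/
def patL (n : ℕ) (ω : Ω) : List Bool :=
  (List.range n).map (fun j => decide (ξ (j+1) ω = -1))

lemma patL_length (n : ℕ) (ω : Ω) : (patL ξ n ω).length = n := by simp [patL]

lemma patL_getElem (n : ℕ) (ω : Ω) (j : ℕ) (hj : j < n) :
    (patL ξ n ω).getD j true = decide (ξ (j+1) ω = -1) := by
  rw [List.getD_eq_getElem _ _ (by simpa [patL_length] using hj)]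
  simp [patL]

lemma wsum_count : ∀ l : List Bool,
    (l.map wval).sum = (l.count false : ℤ) - (l.count true : ℤ) ∧
      l.count false + l.count true = l.length := by
  intro l
  induction l with
  | nil => simp
  | cons b t ih =>
    obtain ⟨ih1, ih2⟩ := ih
    cases b <;> simp [wval, List.count_cons, ih1] <;> push_cast <;> omega

lemma bufferWalk_zero (x : ℕ) (ω : Ω) : bufferWalk ξ x 0 ω = x := by
  simp [bufferWalk]

lemma bufferWalk_succ (x m : ℕ) (ω : Ω) :
    bufferWalk ξ x (m+1) ω = bufferWalk ξ x m ω + ξ (m+1) ω := by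
  unfold bufferWalk
  rw [Finset.sum_Icc_succ_top (by omega)]
  ring

lemma bufferWalk_dep (hval : ∀ i ω, ξ i ω = 1 ∨ ξ i ω = -1) (x m : ℕ) (ω : Ω) :
    bufferWalk ξ x m ω = (x : ℤ) + m - 2 * departures ξ m ω := by
  unfold bufferWalk departures
  rw [← Finset.sum_filter_add_sum_filter_not (Finset.Icc 1 m) (fun i => ξ i ω = -1)]
  have h1 : ∑ i ∈ Finset.filter (fun i => ξ i ω = -1) (Finset.Icc 1 m), ξ i ω
      = -(((Finset.Icc 1 m).filter (fun i => ξ i ω = -1)).card : ℤ) := by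
    rw [Finset.sum_congr rfl (fun i hi => (Finset.mem_filter.mp hi).2)]
    simp
  have h2 : ∑ i ∈ Finset.filter (fun i => ¬ ξ i ω = -1) (Finset.Icc 1 m), ξ i ω
      = (((Finset.Icc 1 m).filter (fun i => ¬ ξ i ω = -1)).card : ℤ) := by
    rw [Finset.sum_congr rfl
      (fun i hi => ((hval i ω).resolve_right (Finset.mem_filter.mp hi).2))]
    simp
  have h3 : ((Finset.Icc 1 m).filter (fun i => ξ i ω = -1)).card
      + ((Finset.Icc 1 m).filter (fun i => ¬ ξ i ω = -1)).card = m := by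
    rw [Finset.card_filter_add_card_filter_not]
    simp
  rw [h1, h2]
  push_cast
  omega

lemma departures_mono (m n : ℕ) (hmn : m ≤ n) (ω : Ω) :
    departures ξ m ω ≤ departures ξ n ω := by
  unfold departures
  exact Finset.card_le_card (Finset.filter_subset_filter _ (Finset.Icc_subset_Icc le_rfl hmn))

lemma departures_le (m : ℕ) (ω : Ω) : departures ξ m ω ≤ m := by
  unfold departures
  calc _ ≤ (Finset.Icc 1 m).card := Finset.card_le_card (Finset.filter_subset _ _)
  _ = m := by simp

lemma bufferWalk_eq_patL (hval : ∀ i ω, ξ i ω = 1 ∨ ξ i ω = -1) (x : ℕ) (ω : Ω)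
    (m n : ℕ) (hm : m ≤ n) :
    bufferWalk ξ x m ω = (x : ℤ) + (((patL ξ n ω).take m).map wval).sum := by
  have ht : (patL ξ n ω).take m = patL ξ m ω := by
    simp [patL, ← List.map_take, List.take_range, Nat.min_eq_left hm]
  rw [ht]
  unfold bufferWalk
  congr 1
  have h1 : ∑ i ∈ Finset.Icc 1 m, ξ i ω = ∑ j ∈ Finset.range m, ξ (1+j) ω := by
    rw [← Finset.Ico_add_one_right_eq_Icc, Finset.sum_Ico_eq_sum_range]; simp
  have h2 : ((patL ξ m ω).map wval).sum
      = ∑ j ∈ Finset.range m, wval (decide (ξ (j+1) ω = -1)) := by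
    simp only [patL, List.map_map]
    rfl
  rw [h1, h2]
  apply Finset.sum_congr rfl
  intro j _
  rw [Nat.add_comm 1 j]
  rcases hval (j+1) ω with h | h <;> simp [h, wval]

lemma walk_pos_of_ne (hval : ∀ i ω, ξ i ω = 1 ∨ ξ i ω = -1) (x : ℕ) (hx : 1 ≤ x)
    (ω : Ω) (n : ℕ) (h : ∀ m < n, bufferWalk ξ x m ω ≠ 0) :
    ∀ m < n, 0 < bufferWalk ξ x m ω := by
  intro m
  induction m with
  | zero => intro _; rw [bufferWalk_zero]; exact_mod_cast hx
  | succ m ih =>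
    intro hm
    have hm' : 0 < bufferWalk ξ x m ω := ih (by omega)
    have hs := bufferWalk_succ ξ x m ω
    have hne := h (m+1) hm
    rcases hval (m+1) ω with h1 | h1 <;> omega

/-- the cylinder event determined by a sign pattern for the first `n` steps. -/
def cylE (n : ℕ) (l : List Bool) : Set Ω :=
  ⋂ i ∈ Finset.Icc 1 n, (ξ i) ⁻¹' {wval (l.getD (i-1) true)}

lemma mem_cylE {n : ℕ} {l : List Bool} {ω : Ω} :
    ω ∈ cylE ξ n l ↔ ∀ i ∈ Finset.Icc 1 n, ξ i ω = wval (l.getD (i-1) true) := by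
  simp [cylE]

lemma self_mem_cylE (hval : ∀ i ω, ξ i ω = 1 ∨ ξ i ω = -1) (n : ℕ) (ω : Ω) :
    ω ∈ cylE ξ n (patL ξ n ω) := by
  rw [mem_cylE]
  intro i hi
  rw [Finset.mem_Icc] at hi
  rw [patL_getElem ξ n ω (i-1) (by omega), show i - 1 + 1 = i by omega]
  rcases hval i ω with h | h <;> simp [h, wval]

lemma eq_patL_of_mem_cylE {n : ℕ} {l : List Bool} (hlen : l.length = n) {ω : Ω}
    (hω : ω ∈ cylE ξ n l) : patL ξ n ω = l := by
  rw [mem_cylE] at hω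
  apply List.ext_getElem (by simp [patL_length, hlen])
  intro j hj hj'
  have hjn : j < n := by simpa [patL_length] using hj
  have := hω (j+1) (by rw [Finset.mem_Icc]; omega)
  rw [show j + 1 - 1 = j by omega, List.getD_eq_getElem _ _ hj'] at this
  have hpat : (patL ξ n ω)[j] = decide (ξ (j+1) ω = -1) := by
    have := patL_getElem ξ n ω j hjn
    rwa [List.getD_eq_getElem _ _ hj] at this
  rw [hpat]
  cases hb : l[j] <;> rw [hb] at this <;> simp [wval] at this <;> simp [this]

lemma event_eq_biUnion (hval : ∀ i ω, ξ i ω = 1 ∨ ξ i ω = -1) (x : ℕ) (hx : 1 ≤ x)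
    (n : ℕ) :
    {ω | bufferWalk ξ x n ω = 0 ∧ ∀ m < n, bufferWalk ξ x m ω ≠ 0}
      = ⋃ l ∈ wpaths (x : ℤ) n, cylE ξ n l := by
  ext ω
  simp only [Set.mem_setOf_eq, Set.mem_iUnion, exists_prop]
  constructor
  · rintro ⟨h0, hne⟩
    refine ⟨patL ξ n ω, ?_, self_mem_cylE ξ hval n ω⟩
    rw [mem_wpaths]
    refine ⟨patL_length ξ n ω, ?_, ?_⟩
    · have := bufferWalk_eq_patL ξ hval x ω n n le_rfl
      rw [List.take_of_length_le (le_of_eq (patL_length ξ n ω))] at this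
      omega
    · intro m hm
      have hpos := walk_pos_of_ne ξ hval x hx ω n hne m hm
      have := bufferWalk_eq_patL ξ hval x ω m n hm.le
      omega
  · rintro ⟨l, hl, hω⟩
    have hlen : l.length = n := ((mem_wpaths n _ l).mp hl).1
    have hpat : patL ξ n ω = l := eq_patL_of_mem_cylE ξ hlen hω
    rw [← hpat, mem_wpaths] at hl
    obtain ⟨-, hsum, hpos⟩ := hl
    constructor
    · have := bufferWalk_eq_patL ξ hval x ω n n le_rfl
      rw [List.take_of_length_le (le_of_eq (patL_length ξ n ω))] at this
      omega
    · intro m hm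
      have h1 := hpos m hm
      have := bufferWalk_eq_patL ξ hval x ω m n hm.le
      omega

lemma cylE_measurable [MeasurableSpace Ω] (hmeas : ∀ i, Measurable (ξ i)) (n : ℕ)
    (l : List Bool) : MeasurableSet (cylE ξ n l) := by
  exact Finset.measurableSet_biInter _ (fun i _ => (hmeas i) (measurableSet_singleton _))

end probside

lemma prod_if_getD (Pr Q : ENNReal) : ∀ l : List Bool,
    (∏ j ∈ Finset.range l.length, (if l.getD j true then Q else Pr))
      = Pr ^ (l.count false) * Q ^ (l.count true) := by
  intro l
  induction l with
  | nil => simp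
  | cons b t ih =>
    rw [List.length_cons, Finset.prod_range_succ']
    simp only [List.getD_cons_succ, List.getD_cons_zero, ih]
    cases b <;> simp [List.count_cons, pow_succ] <;> ring

/-- For `x ≥ 1` and `φ > x`, the probability that the buffer walk started at `x`
empties within the first `φ − 2` departures equals
`P_s1 = ∑_{k=x}^{φ−2} (x/(2k−x)) · C(2k−x, k−x) · p^{k−x} · q^k`. -/
theorem emptying_before_offset_probability
    {Ω : Type*} [MeasurableSpace Ω] (P : Measure Ω) [IsProbabilityMeasure P]
    (p q : ℝ) (hp0 : 0 < p) (hp1 : p < 1) (hq : q = 1 - p)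
    (ξ : ℕ → Ω → ℤ)
    (hmeas : ∀ i, Measurable (ξ i))
    (hindep : iIndepFun ξ P)
    (hval : ∀ i ω, ξ i ω = 1 ∨ ξ i ω = -1)
    (harr : ∀ i, P {ω | ξ i ω = 1} = ENNReal.ofReal p)
    (hdep : ∀ i, P {ω | ξ i ω = -1} = ENNReal.ofReal q)
    (x φ : ℕ) (hx : 1 ≤ x) (hφ : x < φ) :
    P {ω | ∃ n, bufferWalk ξ x n ω = 0 ∧ departures ξ n ω ≤ φ - 2} =
      ENNReal.ofReal (∑ k ∈ Finset.Icc x (φ - 2),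
        ((x : ℝ) / (2 * k - x)) * (Nat.choose (2 * k - x) (k - x)) *
          p ^ (k - x) * q ^ k) := by
  have hq0 : 0 < q := by rw [hq]; linarith
  set φ2 := φ - 2 with hφ2
  set E : ℕ → Set Ω := fun k =>
    {ω | bufferWalk ξ x (2*k - x) ω = 0 ∧ ∀ m < 2*k - x, bufferWalk ξ x m ω ≠ 0} with hE
  -- Step 1: decompose the event according to the number of departures at first emptying
  have hsplit : {ω | ∃ n, bufferWalk ξ x n ω = 0 ∧ departures ξ n ω ≤ φ2}
      = ⋃ k ∈ Finset.Icc x φ2, E k := by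
    ext ω
    simp only [Set.mem_setOf_eq, Set.mem_iUnion, exists_prop, Finset.mem_Icc, hE]
    constructor
    · rintro ⟨n₀, h0, hdep0⟩
      have hex : ∃ n, bufferWalk ξ x n ω = 0 := ⟨n₀, h0⟩
      have hT0 : bufferWalk ξ x (Nat.find hex) ω = 0 := Nat.find_spec hex
      have hTmin : ∀ m < Nat.find hex, bufferWalk ξ x m ω ≠ 0 :=
        fun m hm => Nat.find_min hex hm
      have hTle : Nat.find hex ≤ n₀ := Nat.find_min' hex h0
      have hwd := bufferWalk_dep ξ hval x (Nat.find hex) ω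
      have hkT : departures ξ (Nat.find hex) ω ≤ Nat.find hex := departures_le ξ _ ω
      have hTk : Nat.find hex = 2 * departures ξ (Nat.find hex) ω - x
          ∧ x ≤ departures ξ (Nat.find hex) ω := by
        rw [hT0] at hwd
        constructor <;> omega
      have hkφ : departures ξ (Nat.find hex) ω ≤ φ2 :=
        le_trans (departures_mono ξ _ n₀ hTle ω) hdep0
      exact ⟨departures ξ (Nat.find hex) ω, ⟨hTk.2, hkφ⟩,
        by rw [← hTk.1]; exact ⟨hT0, hTmin⟩⟩
    · rintro ⟨k, ⟨hxk, hkφ⟩, h0, -⟩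
      refine ⟨2*k - x, h0, ?_⟩
      have hwd := bufferWalk_dep ξ hval x (2*k - x) ω
      rw [h0] at hwd
      have hkd : departures ξ (2*k - x) ω = k := by omega
      omega
  have hEeq : ∀ k, E k = ⋃ l ∈ wpaths (x:ℤ) (2*k - x), cylE ξ (2*k - x) l :=
    fun k => event_eq_biUnion ξ hval x hx (2*k - x)
  have hEmeas : ∀ k ∈ Finset.Icc x φ2, MeasurableSet (E k) := by
    intro k _
    rw [hEeq k]
    exact (wpaths (x:ℤ) (2*k - x)).measurableSet_biUnion
      (fun l _ => cylE_measurable ξ hmeas _ l)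
  have hdisj : (↑(Finset.Icc x φ2) : Set ℕ).PairwiseDisjoint E := by
    intro k hk k' hk' hne
    simp only [Finset.coe_Icc, Set.mem_Icc] at hk hk'
    refine Set.disjoint_left.mpr ?_
    rintro ω ⟨h0, hmin⟩ ⟨h0', hmin'⟩
    have hne' : 2*k - x ≠ 2*k' - x := by omega
    rcases Nat.lt_or_ge (2*k - x) (2*k' - x) with h | h
    · exact hmin' _ h h0
    · exact hmin _ (lt_of_le_of_ne h (by omega)) h0'
  rw [hsplit, measure_biUnion_finset hdisj hEmeas]
  -- Step 2: measure of each cylinder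
  have hcylP : ∀ (n : ℕ) (l : List Bool), l.length = n →
      P (cylE ξ n l)
        = (ENNReal.ofReal p) ^ (l.count false) * (ENNReal.ofReal q) ^ (l.count true) := by
    intro n l hlen
    have hpre := hindep.measure_inter_preimage_eq_mul (S := Finset.Icc 1 n)
      (sets := fun i => {wval (l.getD (i-1) true)}) (fun i _ => measurableSet_singleton _)
    have hsing : ∀ i, P (ξ i ⁻¹' {wval (l.getD (i-1) true)})
        = (if l.getD (i-1) true then ENNReal.ofReal q else ENNReal.ofReal p) := by
      intro i
      cases hb : l.getD (i-1) true <;> simp only [hb, if_true, if_false, wval,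
        Bool.false_eq_true]
      · rw [show ξ i ⁻¹' {(1:ℤ)} = {ω | ξ i ω = 1} from rfl]
        exact harr i
      · rw [show ξ i ⁻¹' {(-1:ℤ)} = {ω | ξ i ω = -1} from rfl]
        exact hdep i
    rw [show cylE ξ n l = ⋂ i ∈ Finset.Icc 1 n, ξ i ⁻¹' {wval (l.getD (i-1) true)} from rfl,
      hpre, Finset.prod_congr rfl (fun i _ => hsing i),
      ← Finset.Ico_add_one_right_eq_Icc, Finset.prod_Ico_eq_prod_range]
    have : ∀ j, (1 + j) - 1 = j := fun j => by omega
    simp only [this, Nat.add_sub_cancel, ← hlen]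
    exact prod_if_getD _ _ l
  -- Step 3: measure of each E k
  have hperk : ∀ k ∈ Finset.Icc x φ2, P (E k)
      = ((wpaths (x:ℤ) (2*k - x)).card : ENNReal)
          * ((ENNReal.ofReal p) ^ (k - x) * (ENNReal.ofReal q) ^ k) := by
    intro k hk
    obtain ⟨hxk, -⟩ := Finset.mem_Icc.mp hk
    rw [hEeq k]
    have hdisjl : (↑(wpaths (x:ℤ) (2*k - x)) : Set (List Bool)).PairwiseDisjoint
        (cylE ξ (2*k - x)) := by
      intro l hl l' hl' hne
      refine Set.disjoint_left.mpr (fun {ω} hω hω' => hne ?_)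
      have h1 := eq_patL_of_mem_cylE ξ ((mem_wpaths _ _ l).mp hl).1 hω
      have h2 := eq_patL_of_mem_cylE ξ ((mem_wpaths _ _ l').mp hl').1 hω'
      rw [← h1, h2]
    rw [measure_biUnion_finset hdisjl (fun l _ => cylE_measurable ξ hmeas _ l)]
    have hterm : ∀ l ∈ wpaths (x:ℤ) (2*k - x), P (cylE ξ (2*k - x) l)
        = (ENNReal.ofReal p) ^ (k - x) * (ENNReal.ofReal q) ^ k := by
      intro l hl
      obtain ⟨hlen, hsum, -⟩ := (mem_wpaths _ _ l).mp hl
      obtain ⟨hws, hcnt⟩ := wsum_count l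
      rw [hws] at hsum
      have hct : l.count true = k := by omega
      have hcf : l.count false = k - x := by omega
      rw [hcylP _ l hlen, hct, hcf]
    rw [Finset.sum_congr rfl hterm, Finset.sum_const, nsmul_eq_mul]
  rw [Finset.sum_congr rfl hperk]
  -- Step 4: arithmetic
  have hterm_nonneg : ∀ k ∈ Finset.Icc x φ2,
      0 ≤ ((x : ℝ) / (2 * k - x)) * (Nat.choose (2*k - x) (k - x)) * p ^ (k - x) * q ^ k := by
    intro k hk
    obtain ⟨hxk, -⟩ := Finset.mem_Icc.mp hk
    have h2kx : (0:ℝ) ≤ 2 * (k:ℝ) - x := by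
      have : (x:ℝ) ≤ (k:ℝ) := by exact_mod_cast hxk
      linarith
    have := hp0.le
    have := hq0.le
    positivity
  rw [ENNReal.ofReal_sum_of_nonneg hterm_nonneg]
  apply Finset.sum_congr rfl
  intro k hk
  obtain ⟨hxk, hkφ⟩ := Finset.mem_Icc.mp hk
  have hn0 : 0 < 2*k - x := by omega
  have hcard := wpaths_card_eq (2*k - x) x (by omega) (by omega)
  rw [show ((2*k - x) - x) / 2 = k - x by omega] at hcard
  have h2R : (2 * (k:ℝ) - (x:ℝ)) = ((2*k - x : ℕ) : ℝ) := by
    push_cast [Nat.cast_sub (show x ≤ 2*k by omega)]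
    ring
  have hcardR : ((x:ℝ) / (2 * (k:ℝ) - (x:ℝ))) * (Nat.choose (2*k - x) (k - x) : ℝ)
      = ((wpaths (x:ℤ) (2*k - x)).card : ℝ) := by
    rw [h2R, div_mul_eq_mul_div,
      div_eq_iff (show ((2*k - x : ℕ):ℝ) ≠ 0 by exact_mod_cast hn0.ne')]
    exact_mod_cast (by rw [Nat.mul_comm] at hcard; exact hcard.symm :
      x * Nat.choose (2*k - x) (k - x) = (wpaths (x:ℤ) (2*k - x)).card * (2*k - x))
  have h1 : (0:ℝ) ≤ ((x:ℝ) / (2 * (k:ℝ) - (x:ℝ))) * (Nat.choose (2*k - x) (k - x) : ℝ) := by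
    rw [hcardR]; positivity
  rw [ENNReal.ofReal_mul (mul_nonneg h1 (by positivity)), ENNReal.ofReal_mul h1,
    hcardR, ENNReal.ofReal_natCast, ENNReal.ofReal_pow hp0.le, ENNReal.ofReal_pow hq0.le]
  ring
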